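/- Fix κ > 1 and define r(x,κ) = √(2π) · g(x,κ) · e^{x²/2}, where g(x,κ) = (e^{1/(π(κ-1)+2)}/(2κ)) · √((κ-1)(π(κ-1)+2)/π) · e^{-κx²/2}. Then there exist unique points x₁ and x₂ with 0 < x₁ < 1/√(κ-1) < x₂ such that for x ≥ 0, κ·x·r(x,κ) ≥ 1 holds if and only if x ∈ [x₁, x₂], and equality holds if and only if x = x₁ or x = x₂. -/

import Mathlib

open Real

noncomputable def gfun (x κ : ℝ) : ℝ :=
  (Real.exp (1 / (Real.pi * (κ - 1) + 2)) / (2 * κ)) *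
    Real.sqrt ((κ - 1) * (Real.pi * (κ - 1) + 2) / Real.pi) *
    Real.exp (-(κ * x ^ 2) / 2)

noncomputable def rfun (x κ : ℝ) : ℝ :=
  Real.sqrt (2 * Real.pi) * gfun x κ * Real.exp (x ^ 2 / 2)



lemma hasDerivAt_F (A b x : ℝ) :
    HasDerivAt (fun x => A * (x * Real.exp (-(b * x ^ 2) / 2)))
      (A * ((1 - b * x ^ 2) * Real.exp (-(b * x ^ 2) / 2))) x := by
  have h1 : HasDerivAt (fun x : ℝ => -(b * x ^ 2) / 2) (-(b * x)) x := by
    have h := ((hasDerivAt_pow 2 x).const_mul b).neg.div_const 2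
    refine h.congr_deriv ?_
    push_cast; ring
  have h2 := ((hasDerivAt_id x).mul h1.exp).const_mul A
  refine h2.congr_deriv ?_
  simp only [id_eq]
  ring

lemma F_mono (A b : ℝ) (hA : 0 < A) (hb : 0 < b) :
    StrictMonoOn (fun x => A * (x * Real.exp (-(b * x ^ 2) / 2)))
      (Set.Icc 0 (1 / Real.sqrt b)) := by
  have hsb : 0 < Real.sqrt b := Real.sqrt_pos.mpr hb
  apply strictMonoOn_of_deriv_pos (convex_Icc _ _)
  · fun_prop
  · intro x hx
    rw [interior_Icc, Set.mem_Ioo] at hx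
    rw [(hasDerivAt_F A b x).deriv]
    have h1 : x ^ 2 < (1 / Real.sqrt b) ^ 2 := by
      apply pow_lt_pow_left₀ hx.2 hx.1.le (by norm_num)
    rw [div_pow, one_pow, Real.sq_sqrt hb.le] at h1
    have h2 : b * x ^ 2 < 1 := by
      rw [lt_div_iff₀ hb] at h1; nlinarith
    exact mul_pos hA (mul_pos (by linarith) (Real.exp_pos _))

lemma F_anti (A b : ℝ) (hA : 0 < A) (hb : 0 < b) :
    StrictAntiOn (fun x => A * (x * Real.exp (-(b * x ^ 2) / 2)))
      (Set.Ici (1 / Real.sqrt b)) := by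
  have hsb : 0 < Real.sqrt b := Real.sqrt_pos.mpr hb
  apply strictAntiOn_of_deriv_neg (convex_Ici _)
  · fun_prop
  · intro x hx
    rw [interior_Ici, Set.mem_Ioi] at hx
    rw [(hasDerivAt_F A b x).deriv]
    have h1 : (1 / Real.sqrt b) ^ 2 < x ^ 2 := by
      apply pow_lt_pow_left₀ hx (by positivity) (by norm_num)
    rw [div_pow, one_pow, Real.sq_sqrt hb.le] at h1
    have h2 : 1 < b * x ^ 2 := by
      rw [div_lt_iff₀ hb] at h1; nlinarith
    exact mul_neg_of_pos_of_neg hA (mul_neg_of_neg_of_pos (by linarith) (Real.exp_pos _))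

lemma key_ineq (u : ℝ) (hu : 1 < u) : Real.exp (1 - 1 / u) < u := by
  have hu0 : 0 < u := by linarith
  have h1 : 1 - Real.log u < Real.exp (-Real.log u) := by
    have := Real.add_one_lt_exp (x := -Real.log u)
      (neg_ne_zero.mpr (Real.log_pos hu).ne')
    linarith
  rw [Real.exp_neg, Real.exp_log hu0] at h1
  rw [one_div] at *
  calc Real.exp (1 - u⁻¹) < Real.exp (Real.log u) := Real.exp_lt_exp.mpr (by linarith)
    _ = u := Real.exp_log hu0

lemma key2 (u : ℝ) (hu : 1 < u) : 1 < Real.sqrt u * Real.exp (1 / (2 * u) - 1 / 2) := by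
  have hu0 : 0 < u := by linarith
  have h2 : Real.exp (1 / 2 - 1 / (2 * u)) < Real.sqrt u := by
    rw [show (1:ℝ)/2 - 1/(2*u) = (1 - 1/u)/2 by field_simp]
    rw [Real.lt_sqrt (Real.exp_pos _).le]
    rw [sq, ← Real.exp_add, show (1 - 1/u)/2 + (1 - 1/u)/2 = 1 - 1/u by ring]
    exact key_ineq u hu
  have h3 := mul_lt_mul_of_pos_right h2 (Real.exp_pos (1 / (2 * u) - 1 / 2))
  rwa [← Real.exp_add, show (1:ℝ)/2 - 1/(2*u) + (1/(2*u) - 1/2) = 0 by ring,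
    Real.exp_zero] at h3

lemma main_core (A b : ℝ) (hA : 0 < A) (hb : 0 < b)
    (hpeak : 1 < A * ((1 / Real.sqrt b) * Real.exp (-(b * (1 / Real.sqrt b) ^ 2) / 2))) :
    ∃! p : ℝ × ℝ, 0 < p.1 ∧ p.1 < 1 / Real.sqrt b ∧ 1 / Real.sqrt b < p.2 ∧
      (∀ x : ℝ, 0 ≤ x →
        ((1 ≤ A * (x * Real.exp (-(b * x ^ 2) / 2)) ↔ x ∈ Set.Icc p.1 p.2) ∧
         (A * (x * Real.exp (-(b * x ^ 2) / 2)) = 1 ↔ x = p.1 ∨ x = p.2))) := by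
  set F : ℝ → ℝ := fun x => A * (x * Real.exp (-(b * x ^ 2) / 2)) with hFdef
  set m : ℝ := 1 / Real.sqrt b with hm
  have hsb : 0 < Real.sqrt b := Real.sqrt_pos.mpr hb
  have hm0 : 0 < m := by positivity
  have mono : StrictMonoOn F (Set.Icc 0 m) := F_mono A b hA hb
  have anti : StrictAntiOn F (Set.Ici m) := F_anti A b hA hb
  have hcont : Continuous F := by fun_prop
  have hF0 : F 0 = 0 := by simp [hFdef]
  have hFm : 1 < F m := hpeak
  obtain ⟨x₁, hx₁m, hFx₁⟩ : ∃ x₁ ∈ Set.Ioo 0 m, F x₁ = 1 := by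
    have h := intermediate_value_Ioo hm0.le hcont.continuousOn (a := 0) (b := m)
    obtain ⟨x, hx, hfx⟩ := h (by rw [hF0]; exact ⟨one_pos, hFm⟩)
    exact ⟨x, hx, hfx⟩
  set X : ℝ := max (m + 1) (2 * A / b) with hXdef
  have hmX : m < X := lt_of_lt_of_le (lt_add_one m) (le_max_left _ _)
  have hX0 : 0 < X := hm0.trans hmX
  have hFX : F X < 1 := by
    have h1 : b * X ^ 2 / 2 + 1 ≤ Real.exp (b * X ^ 2 / 2) := by
      have := Real.add_one_le_exp (b * X ^ 2 / 2); linarith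
    have h2 : 2 * A ≤ b * X := by
      have h2' : 2 * A / b ≤ X := le_max_right _ _
      rw [div_le_iff₀ hb] at h2'; linarith
    have h3 : A * X < Real.exp (b * X ^ 2 / 2) := by
      nlinarith [mul_le_mul_of_nonneg_right h2 hX0.le]
    have h4 : F X = (A * X) / Real.exp (b * X ^ 2 / 2) := by
      simp only [hFdef]
      rw [neg_div, Real.exp_neg]
      ring
    rw [h4, div_lt_one (Real.exp_pos _)]; exact h3
  obtain ⟨x₂, hx₂m, hFx₂⟩ : ∃ x₂ ∈ Set.Ioo m X, F x₂ = 1 := by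
    have h := intermediate_value_Ioo' hmX.le hcont.continuousOn
    obtain ⟨x, hx, hfx⟩ := h ⟨hFX, hFm⟩
    exact ⟨x, hx, hfx⟩
  have hx₁Icc : x₁ ∈ Set.Icc 0 m := ⟨hx₁m.1.le, hx₁m.2.le⟩
  have iff1 : ∀ x : ℝ, 0 ≤ x → (1 ≤ F x ↔ x ∈ Set.Icc x₁ x₂) := by
    intro x hx
    constructor
    · intro h1
      constructor
      · by_contra hc
        push_neg at hc
        have hxm : x ∈ Set.Icc 0 m := ⟨hx, by linarith [hx₁m.2]⟩
        have := mono hxm hx₁Icc hc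
        rw [hFx₁] at this; linarith
      · by_contra hc
        push_neg at hc
        have := anti (Set.mem_Ici.mpr hx₂m.1.le) (Set.mem_Ici.mpr (hx₂m.1.trans hc).le) hc
        rw [hFx₂] at this; linarith
    · intro hmem
      rcases le_total x m with hle | hge
      · have := mono.monotoneOn hx₁Icc ⟨hx, hle⟩ hmem.1
        rwa [hFx₁] at this
      · have := anti.antitoneOn (Set.mem_Ici.mpr hge) (Set.mem_Ici.mpr hx₂m.1.le) hmem.2
        rwa [hFx₂] at this
  have iff2 : ∀ x : ℝ, 0 ≤ x → (F x = 1 ↔ x = x₁ ∨ x = x₂) := by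
    intro x hx
    constructor
    · intro heq
      have hmem : x ∈ Set.Icc x₁ x₂ := (iff1 x hx).mp heq.ge
      by_contra hc
      push_neg at hc
      obtain ⟨hne1, hne2⟩ := hc
      have h1 : x₁ < x := lt_of_le_of_ne hmem.1 (Ne.symm hne1)
      have h2 : x < x₂ := lt_of_le_of_ne hmem.2 hne2
      rcases le_total x m with hle | hge
      · have := mono hx₁Icc ⟨hx, hle⟩ h1
        rw [hFx₁] at this; linarith
      · have := anti (Set.mem_Ici.mpr hge) (Set.mem_Ici.mpr hx₂m.1.le) h2
        rw [hFx₂] at this; linarith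
    · rintro (rfl | rfl)
      exacts [hFx₁, hFx₂]
  refine ⟨(x₁, x₂), ⟨hx₁m.1, hx₁m.2, hx₂m.1, fun x hx => ⟨iff1 x hx, iff2 x hx⟩⟩, ?_⟩
  rintro ⟨q₁, q₂⟩ ⟨hq1, hq2, hq3, hq4⟩
  have hq₂0 : (0:ℝ) ≤ q₂ := le_of_lt (hm0.trans hq3)
  have e1 : F q₁ = 1 := ((hq4 q₁ hq1.le).2).mpr (Or.inl rfl)
  have e2 : F q₂ = 1 := ((hq4 q₂ hq₂0).2).mpr (Or.inr rfl)
  have d1 := (iff2 q₁ hq1.le).mp e1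
  have d2 := (iff2 q₂ hq₂0).mp e2
  have hq1x : q₁ = x₁ := by
    rcases d1 with h | h
    · exact h
    · exfalso; rw [h] at hq2; linarith [hx₂m.1]
  have hq2x : q₂ = x₂ := by
    rcases d2 with h | h
    · exfalso; rw [h] at hq3; linarith [hx₁m.2]
    · exact h
  simp [hq1x, hq2x]

theorem stmt3 (κ : ℝ) (hκ : 1 < κ) :
    ∃! p : ℝ × ℝ, 0 < p.1 ∧ p.1 < 1 / Real.sqrt (κ - 1) ∧
      1 / Real.sqrt (κ - 1) < p.2 ∧
      (∀ x : ℝ, 0 ≤ x →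
        ((1 ≤ κ * x * rfun x κ ↔ x ∈ Set.Icc p.1 p.2) ∧
         (κ * x * rfun x κ = 1 ↔ x = p.1 ∨ x = p.2))) := by
  have hπ : 0 < Real.pi := Real.pi_pos
  have hb : 0 < κ - 1 := by linarith
  have hκ0 : κ ≠ 0 := by positivity
  have hs : 0 < Real.pi * (κ - 1) + 2 := by positivity
  have hsb : (0:ℝ) < Real.sqrt (κ - 1) := Real.sqrt_pos.mpr hb
  have hA : 0 < Real.sqrt ((Real.pi * (κ - 1) + 2) / 2) * Real.sqrt (κ - 1) *
      Real.exp (1 / (Real.pi * (κ - 1) + 2)) := by positivity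
  -- the constant identity
  have hC : κ * Real.sqrt (2 * Real.pi) *
      (Real.exp (1 / (Real.pi * (κ - 1) + 2)) / (2 * κ) *
        Real.sqrt ((κ - 1) * (Real.pi * (κ - 1) + 2) / Real.pi))
      = Real.sqrt ((Real.pi * (κ - 1) + 2) / 2) * Real.sqrt (κ - 1) *
        Real.exp (1 / (Real.pi * (κ - 1) + 2)) := by
    have e1 : Real.sqrt (2 * Real.pi) *
        Real.sqrt ((κ - 1) * (Real.pi * (κ - 1) + 2) / Real.pi)
        = 2 * (Real.sqrt ((Real.pi * (κ - 1) + 2) / 2) * Real.sqrt (κ - 1)) := by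
      rw [← Real.sqrt_mul (by positivity)]
      rw [show 2 * Real.pi * ((κ - 1) * (Real.pi * (κ - 1) + 2) / Real.pi)
          = 2 ^ 2 * ((Real.pi * (κ - 1) + 2) / 2 * (κ - 1)) by field_simp]
      rw [Real.sqrt_mul (by positivity), Real.sqrt_mul (by positivity),
        Real.sqrt_sq (by norm_num : (0:ℝ) ≤ 2)]
    have e2 : κ * Real.sqrt (2 * Real.pi) *
        (Real.exp (1 / (Real.pi * (κ - 1) + 2)) / (2 * κ) *
          Real.sqrt ((κ - 1) * (Real.pi * (κ - 1) + 2) / Real.pi))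
        = (Real.sqrt (2 * Real.pi) *
            Real.sqrt ((κ - 1) * (Real.pi * (κ - 1) + 2) / Real.pi)) *
          Real.exp (1 / (Real.pi * (κ - 1) + 2)) / 2 := by
      field_simp
    rw [e2, e1]; ring
  -- rewrite the objective function
  have hF : ∀ x : ℝ, κ * x * rfun x κ
      = Real.sqrt ((Real.pi * (κ - 1) + 2) / 2) * Real.sqrt (κ - 1) *
          Real.exp (1 / (Real.pi * (κ - 1) + 2)) *
        (x * Real.exp (-((κ - 1) * x ^ 2) / 2)) := by
    intro x
    have hexp : Real.exp (-(κ * x ^ 2) / 2) * Real.exp (x ^ 2 / 2)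
        = Real.exp (-((κ - 1) * x ^ 2) / 2) := by
      rw [← Real.exp_add]; congr 1; ring
    simp only [rfun, gfun]
    rw [← hC, ← hexp]
    ring
  -- peak value
  have hpeak : 1 < Real.sqrt ((Real.pi * (κ - 1) + 2) / 2) * Real.sqrt (κ - 1) *
      Real.exp (1 / (Real.pi * (κ - 1) + 2)) *
      ((1 / Real.sqrt (κ - 1)) *
        Real.exp (-((κ - 1) * (1 / Real.sqrt (κ - 1)) ^ 2) / 2)) := by
    have hbm : (κ - 1) * (1 / Real.sqrt (κ - 1)) ^ 2 = 1 := by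
      rw [div_pow, one_pow, Real.sq_sqrt hb.le]
      field_simp
    rw [hbm]
    have hu : 1 < (Real.pi * (κ - 1) + 2) / 2 := by nlinarith
    have hk := key2 _ hu
    rw [show 2 * ((Real.pi * (κ - 1) + 2) / 2) = Real.pi * (κ - 1) + 2 by ring] at hk
    have e3 : Real.sqrt ((Real.pi * (κ - 1) + 2) / 2) * Real.sqrt (κ - 1) *
        Real.exp (1 / (Real.pi * (κ - 1) + 2)) *
        (1 / Real.sqrt (κ - 1) * Real.exp (-1 / 2))
        = Real.sqrt ((Real.pi * (κ - 1) + 2) / 2) *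
          (Real.exp (1 / (Real.pi * (κ - 1) + 2)) * Real.exp (-1 / 2)) *
          (Real.sqrt (κ - 1) / Real.sqrt (κ - 1)) := by ring
    rw [e3, div_self hsb.ne', mul_one, ← Real.exp_add,
      show 1 / (Real.pi * (κ - 1) + 2) + -1 / 2 = 1 / (Real.pi * (κ - 1) + 2) - 1 / 2
        by ring]
    exact hk
  have key := main_core _ _ hA hb hpeak
  simp only [hF]
  exact key
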